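/- Let D ∈ ℝ^{n×N} be a tight frame (DD* = I_n), and let A ∈ ℝ^{m×n} satisfy the D-RIP₁ of order t = 25s with constant δ = 1/5, i.e. (1−δ)‖g‖₂ ≤ ‖Ag‖₁ ≤ (1+δ)‖g‖₂ for all g = Dx with x s-sparse of sparsity at most t. Then for every effectively s-analysis-sparse f ∈ ℝ^n (‖D*f‖₁ ≤ √s‖D*f‖₂), one has ‖Af‖₁ ≥ (2/(5√s)) ‖D*f‖₁. -/

import Mathlib

noncomputable def norm2 {ι : Type*} [Fintype ι] (x : ι → ℝ) : ℝ :=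
  Real.sqrt (∑ i, x i ^ 2)

noncomputable def norm1 {ι : Type*} [Fintype ι] (x : ι → ℝ) : ℝ := ∑ i, |x i|

lemma norm1_nonneg' {ι : Type*} [Fintype ι] (x : ι → ℝ) : 0 ≤ norm1 x :=
  Finset.sum_nonneg fun _ _ => abs_nonneg _

lemma norm2_nonneg' {ι : Type*} [Fintype ι] (x : ι → ℝ) : 0 ≤ norm2 x :=
  Real.sqrt_nonneg _

lemma norm1_sub_le' {ι : Type*} [Fintype ι] (a b : ι → ℝ) :
    norm1 (fun i => a i - b i) ≤ norm1 a + norm1 b := by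
  rw [norm1, norm1, norm1, ← Finset.sum_add_distrib]
  exact Finset.sum_le_sum fun i _ => abs_sub _ _

lemma norm1_sum_le' {ι κ : Type*} [Fintype ι] (F : Finset κ) (v : κ → ι → ℝ) :
    norm1 (fun i => ∑ k ∈ F, v k i) ≤ ∑ k ∈ F, norm1 (v k) := by
  calc norm1 (fun i => ∑ k ∈ F, v k i) = ∑ i, |∑ k ∈ F, v k i| := rfl
    _ ≤ ∑ i, ∑ k ∈ F, |v k i| :=
        Finset.sum_le_sum fun i _ => Finset.abs_sum_le_sum_abs _ _
    _ = ∑ k ∈ F, ∑ i, |v k i| := Finset.sum_comm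
    _ = ∑ k ∈ F, norm1 (v k) := rfl

lemma norm2_eq_norm' {ι : Type*} [Fintype ι] (x : ι → ℝ) :
    norm2 x = ‖(WithLp.equiv 2 (ι → ℝ)).symm x‖ := by
  rw [EuclideanSpace.norm_eq]
  simp [norm2, sq_abs]

lemma norm2_add_le' {ι : Type*} [Fintype ι] (a b : ι → ℝ) :
    norm2 (fun i => a i + b i) ≤ norm2 a + norm2 b := by
  rw [norm2_eq_norm', norm2_eq_norm', norm2_eq_norm']
  exact norm_add_le ((WithLp.equiv 2 (ι → ℝ)).symm a) ((WithLp.equiv 2 (ι → ℝ)).symm b)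

lemma norm2_sum_le' {ι κ : Type*} [Fintype ι] (F : Finset κ) (v : κ → ι → ℝ) :
    norm2 (fun i => ∑ k ∈ F, v k i) ≤ ∑ k ∈ F, norm2 (v k) := by
  classical
  induction F using Finset.cons_induction with
  | empty => simp [norm2]
  | cons k F hk ih =>
      simp only [Finset.sum_cons]
      calc norm2 (fun i => v k i + ∑ j ∈ F, v j i)
          ≤ norm2 (v k) + norm2 (fun i => ∑ j ∈ F, v j i) := norm2_add_le' _ _
        _ ≤ norm2 (v k) + ∑ j ∈ F, norm2 (v j) := by linarith
        _ = _ := rfl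

/-- If the rows of `D` are orthonormal (`D * Dᵀ = 1`) then `‖D y‖₂ ≤ ‖y‖₂`. -/
lemma norm2_mulVec_le' {n N : ℕ} (D : Matrix (Fin n) (Fin N) ℝ)
    (hD : D * D.transpose = 1) (y : Fin N → ℝ) :
    norm2 (D.mulVec y) ≤ norm2 y := by
  classical
  set u : Fin N → ℝ := D.transpose.mulVec (D.mulVec y) with hu
  have hb : ∑ i, (D.mulVec y) i ^ 2 = dotProduct y u := by
    have h1 : ∑ i, (D.mulVec y) i ^ 2 = dotProduct (D.mulVec y) (D.mulVec y) := by
      simp [dotProduct, pow_two]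
    rw [h1, Matrix.dotProduct_mulVec, ← Matrix.mulVec_transpose, hu,
      dotProduct_comm]
  have huu : dotProduct u u = dotProduct y u := by
    have hP : (D.transpose * D) * (D.transpose * D) = D.transpose * D := by
      calc (D.transpose * D) * (D.transpose * D) = D.transpose * (D * D.transpose) * D := by
            simp only [Matrix.mul_assoc]
        _ = D.transpose * D := by rw [hD, Matrix.mul_one]
    have huP : u = (D.transpose * D).mulVec y := by
      rw [hu, Matrix.mulVec_mulVec]
    have hPt : (D.transpose * D).transpose = D.transpose * D := by
      rw [Matrix.transpose_mul, Matrix.transpose_transpose]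
    calc dotProduct u u
        = dotProduct u ((D.transpose * D).mulVec y) := by rw [← huP]
      _ = dotProduct (Matrix.vecMul u (D.transpose * D)) y := by
          rw [Matrix.dotProduct_mulVec]
      _ = dotProduct ((D.transpose * D).mulVec u) y := by
          rw [← Matrix.mulVec_transpose, hPt]
      _ = dotProduct u y := by
          rw [huP, Matrix.mulVec_mulVec, hP, ← huP]
      _ = dotProduct y u := dotProduct_comm _ _
  set b : ℝ := ∑ i, (D.mulVec y) i ^ 2 with hbdef
  have hbnn : 0 ≤ b := Finset.sum_nonneg fun _ _ => sq_nonneg _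
  have hCS : b ^ 2 ≤ (∑ i, y i ^ 2) * b := by
    have h2 : b = ∑ i, y i * u i := by rw [hb]; rfl
    have h3 : dotProduct u u = ∑ i, u i ^ 2 := by
      simp [dotProduct, pow_two]
    calc b ^ 2 = (∑ i, y i * u i) ^ 2 := by rw [h2]
      _ ≤ (∑ i, y i ^ 2) * ∑ i, u i ^ 2 :=
          Finset.sum_mul_sq_le_sq_mul_sq _ _ _
      _ = (∑ i, y i ^ 2) * b := by rw [← h3, huu, ← hb]
  have hble : b ≤ ∑ i, y i ^ 2 := by
    rcases eq_or_lt_of_le hbnn with h | h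
    · rw [← h]; exact Finset.sum_nonneg fun _ _ => sq_nonneg _
    · nlinarith
  exact Real.sqrt_le_sqrt hble

open Finset in
/-- If A satisfies the D-RIP₁ of order t = 25s with constant δ = 1/5, then for every effectively
s-analysis-sparse f, ‖Af‖₁ ≥ (2/(5√s))‖D*f‖₁. -/
theorem stmt4 (m n N s : ℕ)
    (D : Matrix (Fin n) (Fin N) ℝ) (hD : D * D.transpose = 1)
    (A : Matrix (Fin m) (Fin n) ℝ)
    (hRIP : ∀ x : Fin N → ℝ, (Finset.univ.filter fun j => x j ≠ 0).card ≤ 25 * s →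
      (1 - 1/5) * norm2 (D.mulVec x) ≤ norm1 (A.mulVec (D.mulVec x)) ∧
      norm1 (A.mulVec (D.mulVec x)) ≤ (1 + 1/5) * norm2 (D.mulVec x))
    (f : Fin n → ℝ)
    (heff : norm1 (D.transpose.mulVec f) ≤ Real.sqrt s * norm2 (D.transpose.mulVec f)) :
    2 / (5 * Real.sqrt s) * norm1 (D.transpose.mulVec f) ≤ norm1 (A.mulVec f) := by
  classical
  rcases Nat.eq_zero_or_pos s with hs | hs
  · subst hs
    simp only [Nat.cast_zero, Real.sqrt_zero, mul_zero, div_zero, zero_mul]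
    exact norm1_nonneg' _
  set x : Fin N → ℝ := D.transpose.mulVec f with hxdef
  set t : ℕ := 25 * s with htdef
  have ht : 0 < t := by positivity
  have htR : (0:ℝ) < (t:ℝ) := by exact_mod_cast ht
  set σ : Equiv.Perm (Fin N) := Tuple.sort (fun j => -|x j|) with hσ
  have hmono : ∀ a b : Fin N, a ≤ b → |x (σ b)| ≤ |x (σ a)| := by
    intro a b hab
    have h := Tuple.monotone_sort (fun j => -|x j|) hab
    simpa using h
  set blk : Fin N → ℕ := fun i => (σ.symm i : ℕ) / t with hblkdef
  set y : ℕ → Fin N → ℝ := fun k i => if blk i = k then x i else 0 with hydef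
  set K : ℕ := N / t with hKdef
  have hblk_le : ∀ i, blk i ≤ K := fun i =>
    Nat.div_le_div_right (le_of_lt (σ.symm i).isLt)
  have hxsum : ∀ i, x i = ∑ k ∈ range (K+1), y k i := by
    intro i
    rw [hydef]
    rw [Finset.sum_ite_eq (range (K+1)) (blk i) (fun _ => x i)]
    simp [Nat.lt_succ_of_le (hblk_le i)]
  -- sparsity of each block
  have hcard_le : ∀ k : ℕ, (Finset.univ.filter fun j => y k j ≠ 0).card ≤ 25 * s := by
    intro k
    have hsub : (Finset.univ.filter fun j => y k j ≠ 0) ⊆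
        Finset.univ.filter fun j => blk j = k := by
      intro j hj
      simp only [mem_filter, mem_univ, true_and] at hj ⊢
      by_contra h
      exact hj (by simp [hydef, h])
    have h2 : (Finset.univ.filter fun j => blk j = k).card ≤
        (Finset.univ : Finset (Fin t)).card := by
      apply Finset.card_le_card_of_injOn
        (fun j => (⟨(σ.symm j : ℕ) % t, Nat.mod_lt _ ht⟩ : Fin t))
      · intro j _; exact mem_univ _
      · intro j hj j' hj' hee
        simp only [coe_filter, Set.mem_setOf_eq, mem_univ, true_and] at hj hj'
        have h3 : (σ.symm j : ℕ) % t = (σ.symm j' : ℕ) % t := by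
          simpa using congrArg Fin.val hee
        have h4 : (σ.symm j : ℕ) = (σ.symm j' : ℕ) := by
          have hdd : (σ.symm j : ℕ) / t = (σ.symm j' : ℕ) / t := hj.trans hj'.symm
          rw [← Nat.div_add_mod (σ.symm j : ℕ) t, ← Nat.div_add_mod (σ.symm j' : ℕ) t,
            hdd, h3]
        exact σ.symm.injective (Fin.val_injective h4)
    calc (Finset.univ.filter fun j => y k j ≠ 0).card
        ≤ (Finset.univ.filter fun j => blk j = k).card := Finset.card_le_card hsub
      _ ≤ (Finset.univ : Finset (Fin t)).card := h2
      _ = t := by simp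
  -- per-entry bound from the previous block
  have hkey : ∀ k : ℕ, ∀ i : Fin N, blk i = k + 1 → (t : ℝ) * |x i| ≤ norm1 (y k) := by
    intro k i hi
    have hil : (k+1) * t ≤ (σ.symm i : ℕ) := by
      have : k + 1 ≤ (σ.symm i : ℕ) / t := le_of_eq hi.symm
      exact (Nat.le_div_iff_mul_le ht).mp this
    have hlt : ∀ r : Fin t, k * t + (r : ℕ) < N := by
      intro r
      have h1 : k * t + (r : ℕ) < (k+1) * t := by
        have := r.isLt
        nlinarith
      exact lt_of_lt_of_le h1 (le_trans hil (le_of_lt (σ.symm i).isLt))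
    have hfull : t ≤ (Finset.univ.filter fun j => blk j = k).card := by
      have := Finset.card_le_card_of_injOn
        (s := (Finset.univ : Finset (Fin t)))
        (t := Finset.univ.filter fun j => blk j = k)
        (fun r => σ ⟨k * t + (r : ℕ), hlt r⟩) ?_ ?_
      · simpa using this
      · intro r _
        simp only [mem_filter, mem_univ, true_and]
        rw [hblkdef]
        simp only [Equiv.symm_apply_apply]
        simp only [coe_filter, Set.mem_setOf_eq, mem_univ, true_and, Equiv.symm_apply_apply]
        show (k * t + (r : ℕ)) / t = k
        rw [add_comm, mul_comm]
        rw [Nat.add_mul_div_left _ _ ht, Nat.div_eq_of_lt r.isLt]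
        exact Nat.zero_add k
      · intro r _ r' _ hee
        have h9 := σ.injective hee
        have h10 : k * t + (r : ℕ) = k * t + (r' : ℕ) := congrArg Fin.val h9
        exact Fin.val_injective (Nat.add_left_cancel h10)
    have hcmp : ∀ j ∈ Finset.univ.filter fun j' => blk j' = k, |x i| ≤ |x j| := by
      intro j hj
      simp only [mem_filter, mem_univ, true_and] at hj
      have hj' : (σ.symm j : ℕ) / t = k := hj
      have h1 : (σ.symm j : ℕ) < (k+1) * t := by
        have : (σ.symm j : ℕ) / t < k + 1 := by rw [hj']; exact Nat.lt_succ_self k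
        exact (Nat.div_lt_iff_lt_mul ht).mp this
      have hle : σ.symm j ≤ σ.symm i := by
        rw [Fin.le_def]; exact le_trans (le_of_lt h1) hil
      have := hmono _ _ hle
      simpa [Equiv.apply_symm_apply] using this
    have hn1 : norm1 (y k) = ∑ j ∈ Finset.univ.filter fun j' => blk j' = k, |x j| := by
      rw [norm1, Finset.sum_filter]
      congr 1
      funext j
      rw [hydef]
      by_cases h : blk j = k <;> simp [h]
    rw [hn1]
    calc (t : ℝ) * |x i|
        ≤ ((Finset.univ.filter fun j' => blk j' = k).card : ℝ) * |x i| := by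
          apply mul_le_mul_of_nonneg_right _ (abs_nonneg _)
          exact_mod_cast hfull
      _ = ∑ _j ∈ Finset.univ.filter fun j' => blk j' = k, |x i| := by
          rw [Finset.sum_const, nsmul_eq_mul]
      _ ≤ ∑ j ∈ Finset.univ.filter fun j' => blk j' = k, |x j| :=
          Finset.sum_le_sum hcmp
  -- ℓ2 bound on each tail block
  have hsqrtt : (0:ℝ) < Real.sqrt t := Real.sqrt_pos.mpr htR
  have hblock2 : ∀ k : ℕ, norm2 (y (k+1)) ≤ norm1 (y k) / Real.sqrt t := by
    intro k
    have hc : 0 ≤ norm1 (y k) := norm1_nonneg' _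
    set c : ℝ := norm1 (y k) / t with hcdef
    have hcc : 0 ≤ c := by positivity
    have hixbd : ∀ i, |y (k+1) i| ≤ c := by
      intro i
      by_cases h : blk i = k + 1
      · have h2 := hkey k i h
        have h3 : |y (k+1) i| = |x i| := by rw [hydef]; simp [h]
        rw [h3, hcdef]
        rw [le_div_iff₀ htR]
        linarith
      · rw [hydef]; simp [h, hcc]
    have hsum : ∑ i, (y (k+1) i) ^ 2 ≤ (t : ℝ) * c ^ 2 := by
      have h1 : ∑ i, (y (k+1) i) ^ 2
          = ∑ i ∈ Finset.univ.filter fun j => blk j = k+1, (y (k+1) i) ^ 2 := by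
        rw [Finset.sum_filter]
        congr 1
        funext i
        by_cases h : blk i = k+1 <;> simp [hydef, h]
      rw [h1]
      calc ∑ i ∈ Finset.univ.filter fun j => blk j = k+1, (y (k+1) i) ^ 2
          ≤ ∑ _i ∈ Finset.univ.filter fun j => blk j = k+1, c ^ 2 := by
            apply Finset.sum_le_sum
            intro i _
            have := hixbd i
            calc (y (k+1) i) ^ 2 = |y (k+1) i| ^ 2 := (sq_abs _).symm
              _ ≤ c ^ 2 := by nlinarith [abs_nonneg (y (k+1) i)]
        _ = ((Finset.univ.filter fun j => blk j = k+1).card : ℝ) * c ^ 2 := by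
            rw [Finset.sum_const, nsmul_eq_mul]
        _ ≤ (t : ℝ) * c ^ 2 := by
            apply mul_le_mul_of_nonneg_right _ (sq_nonneg _)
            have h2 : (Finset.univ.filter fun j => blk j = k+1).card ≤ t := by
              have hsub : (Finset.univ.filter fun j => blk j = k+1) ⊆
                  Finset.univ.filter fun j => y (k+1) j ≠ 0 ∨ blk j = k + 1 := by
                intro j hj; simp only [mem_filter, mem_univ, true_and] at hj ⊢; exact Or.inr hj
              -- reuse the mod-injection argument
              have : (Finset.univ.filter fun j => blk j = k+1).card ≤
                  (Finset.univ : Finset (Fin t)).card := by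
                apply Finset.card_le_card_of_injOn
                  (fun j => (⟨(σ.symm j : ℕ) % t, Nat.mod_lt _ ht⟩ : Fin t))
                · intro j _; exact mem_univ _
                · intro j hj j' hj' hee
                  simp only [coe_filter, Set.mem_setOf_eq, mem_univ, true_and] at hj hj'
                  have h3 : (σ.symm j : ℕ) % t = (σ.symm j' : ℕ) % t := by
                    simpa using congrArg Fin.val hee
                  have h4 : (σ.symm j : ℕ) = (σ.symm j' : ℕ) := by
                    have hdd : (σ.symm j : ℕ) / t = (σ.symm j' : ℕ) / t := hj.trans hj'.symm
                    rw [← Nat.div_add_mod (σ.symm j : ℕ) t, ← Nat.div_add_mod (σ.symm j' : ℕ) t,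
                      hdd, h3]
                  exact σ.symm.injective (Fin.val_injective h4)
              simpa using this
            exact_mod_cast h2
    have h6 : norm2 (y (k+1)) ≤ Real.sqrt ((t:ℝ) * c ^ 2) := Real.sqrt_le_sqrt hsum
    have h7 : Real.sqrt ((t:ℝ) * c ^ 2) = Real.sqrt t * c := by
      rw [Real.sqrt_mul (le_of_lt htR), Real.sqrt_sq hcc]
    have h8 : Real.sqrt t * c = norm1 (y k) / Real.sqrt t := by
      have ht2 : Real.sqrt t * Real.sqrt t = (t:ℝ) := Real.mul_self_sqrt (le_of_lt htR)
      rw [hcdef, eq_div_iff (ne_of_gt hsqrtt)]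
      rw [mul_comm (Real.sqrt (t:ℝ)) (norm1 (y k) / (t:ℝ)), mul_assoc, ht2]
      field_simp
    rw [h7, h8] at h6
    exact h6
  -- total ℓ1 mass of blocks
  have hnorm1_total : ∑ k ∈ range (K+1), norm1 (y k) = norm1 x := by
    rw [norm1]
    rw [show ∑ k ∈ range (K+1), norm1 (y k) = ∑ k ∈ range (K+1), ∑ i, |y k i| from rfl]
    rw [Finset.sum_comm]
    congr 1
    funext i
    have : ∀ k, |y k i| = if blk i = k then |x i| else 0 := by
      intro k; rw [hydef]; by_cases h : blk i = k <;> simp [h]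
    simp_rw [this]
    rw [Finset.sum_ite_eq (range (K+1)) (blk i) (fun _ => |x i|)]
    simp [Nat.lt_succ_of_le (hblk_le i)]
  -- decomposition of f
  have hf : f = D.mulVec x := by
    rw [hxdef, Matrix.mulVec_mulVec, hD, Matrix.one_mulVec]
  have hxe : x = ∑ k ∈ range (K+1), y k := by
    funext i
    rw [Finset.sum_apply]
    exact hxsum i
  have hDsplit : D.mulVec x = ∑ k ∈ range (K+1), D.mulVec (y k) := by
    rw [hxe]
    simpa only [Matrix.mulVecLin_apply] using map_sum (Matrix.mulVecLin D) y (range (K+1))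
  have hAsplit : A.mulVec f = ∑ k ∈ range (K+1), A.mulVec (D.mulVec (y k)) := by
    rw [hf, hDsplit]
    simpa only [Matrix.mulVecLin_apply] using
      map_sum (Matrix.mulVecLin A) (fun k => D.mulVec (y k)) (range (K+1))
  -- abbreviations
  set E : ℝ := ∑ j ∈ range K, norm2 (y (j+1)) with hEdef
  set L : ℝ := norm1 x with hLdef
  set R2 : ℝ := norm2 x with hR2def
  have hS : (0:ℝ) < Real.sqrt s := Real.sqrt_pos.mpr (by exact_mod_cast hs)
  have hsqrt_t : Real.sqrt t = 5 * Real.sqrt s := by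
    rw [htdef]
    push_cast
    rw [Real.sqrt_mul (by norm_num : (0:ℝ) ≤ 25)]
    rw [show (25:ℝ) = 5^2 by norm_num, Real.sqrt_sq (by norm_num : (0:ℝ) ≤ 5)]
  -- bound on E
  have hE : E ≤ L / (5 * Real.sqrt s) := by
    rw [hEdef]
    calc ∑ j ∈ range K, norm2 (y (j+1))
        ≤ ∑ j ∈ range K, norm1 (y j) / Real.sqrt t :=
          Finset.sum_le_sum fun j _ => hblock2 j
      _ = (∑ j ∈ range K, norm1 (y j)) / Real.sqrt t := by rw [Finset.sum_div]
      _ ≤ L / Real.sqrt t := by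
          gcongr
          calc ∑ j ∈ range K, norm1 (y j)
              ≤ ∑ k ∈ range (K+1), norm1 (y k) :=
                Finset.sum_le_sum_of_subset_of_nonneg
                  (Finset.range_subset_range.mpr (Nat.le_succ K)) (fun _ _ _ => norm1_nonneg' _)
            _ = L := hnorm1_total
      _ = L / (5 * Real.sqrt s) := by rw [hsqrt_t]
  -- triangle inequalities
  have hsum_split : ∀ i, A.mulVec f i
      = A.mulVec (D.mulVec (y 0)) i + ∑ j ∈ range K, A.mulVec (D.mulVec (y (j+1))) i := by
    intro i
    have := congrFun hAsplit i
    rw [this, Finset.sum_apply, Finset.sum_range_succ']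
    exact add_comm _ _
  have hfsum_split : ∀ i, f i
      = D.mulVec (y 0) i + ∑ j ∈ range K, D.mulVec (y (j+1)) i := by
    intro i
    have h0 : f i = (∑ k ∈ range (K+1), D.mulVec (y k)) i := by rw [← hDsplit, ← hf]
    rw [h0, Finset.sum_apply, Finset.sum_range_succ']
    exact add_comm _ _
  -- main chain
  have hW0low := (hRIP (y 0) (hcard_le 0)).1
  have hWup : ∀ j, norm1 (A.mulVec (D.mulVec (y (j+1))))
      ≤ (1 + 1/5) * norm2 (y (j+1)) := by
    intro j
    calc norm1 (A.mulVec (D.mulVec (y (j+1))))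
        ≤ (1 + 1/5) * norm2 (D.mulVec (y (j+1))) := (hRIP (y (j+1)) (hcard_le (j+1))).2
      _ ≤ (1 + 1/5) * norm2 (y (j+1)) := by
          have := norm2_mulVec_le' D hD (y (j+1))
          nlinarith [norm2_nonneg' (D.mulVec (y (j+1)))]
  have hA1 : norm1 (A.mulVec (D.mulVec (y 0)))
      ≤ norm1 (A.mulVec f) + ∑ j ∈ range K, norm1 (A.mulVec (D.mulVec (y (j+1)))) := by
    have h1 : norm1 (A.mulVec (D.mulVec (y 0)))
        = norm1 (fun i => A.mulVec f i - ∑ j ∈ range K, A.mulVec (D.mulVec (y (j+1))) i) := by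
      congr 1
      funext i
      rw [hsum_split i]; ring
    rw [h1]
    calc norm1 (fun i => A.mulVec f i - ∑ j ∈ range K, A.mulVec (D.mulVec (y (j+1))) i)
        ≤ norm1 (A.mulVec f)
          + norm1 (fun i => ∑ j ∈ range K, A.mulVec (D.mulVec (y (j+1))) i) :=
          norm1_sub_le' _ _
      _ ≤ _ := by
          have := norm1_sum_le' (range K) (fun j i => A.mulVec (D.mulVec (y (j+1))) i)
          linarith
  have hA3 : ∑ j ∈ range K, norm1 (A.mulVec (D.mulVec (y (j+1)))) ≤ (1 + 1/5) * E := by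
    rw [hEdef, Finset.mul_sum]
    exact Finset.sum_le_sum fun j _ => hWup j
  have hA4 : R2 ≤ norm2 (D.mulVec (y 0)) + E := by
    have h2 : norm2 f = R2 := by
      have h3 : ∑ i, x i ^ 2 = dotProduct x x := by
        simp [dotProduct, pow_two]
      have h4 : ∑ i, f i ^ 2 = dotProduct f f := by
        simp [dotProduct, pow_two]
      have h5 : dotProduct x x = dotProduct f f := by
        calc dotProduct x x
            = dotProduct x (D.transpose.mulVec f) := by rw [← hxdef]
          _ = dotProduct (Matrix.vecMul x D.transpose) f :=
              Matrix.dotProduct_mulVec _ _ _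
          _ = dotProduct (D.mulVec x) f := by rw [Matrix.vecMul_transpose]
          _ = dotProduct f f := by
              rw [hxdef, Matrix.mulVec_mulVec, hD, Matrix.one_mulVec]
      rw [hR2def, norm2, norm2, h3, h4, h5]
    have h5 : norm2 f ≤ norm2 (D.mulVec (y 0))
        + norm2 (fun i => ∑ j ∈ range K, D.mulVec (y (j+1)) i) := by
      have h6 : norm2 f = norm2 (fun i => D.mulVec (y 0) i
          + ∑ j ∈ range K, D.mulVec (y (j+1)) i) := by
        congr 1
        funext i
        exact hfsum_split i
      rw [h6]
      exact norm2_add_le' _ _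
    have h7 : norm2 (fun i => ∑ j ∈ range K, D.mulVec (y (j+1)) i)
        ≤ ∑ j ∈ range K, norm2 (D.mulVec (y (j+1))) :=
      norm2_sum_le' (range K) _
    have h8 : ∑ j ∈ range K, norm2 (D.mulVec (y (j+1))) ≤ E := by
      rw [hEdef]
      exact Finset.sum_le_sum fun j _ => norm2_mulVec_le' D hD (y (j+1))
    rw [← h2]
    linarith
  -- effective sparsity
  have hq1 : L / Real.sqrt s ≤ R2 := by
    rw [div_le_iff₀ hS]
    have : L ≤ Real.sqrt s * R2 := heff
    linarith [mul_comm R2 (Real.sqrt s)]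
  -- final computation
  have hgoal : 2 / (5 * Real.sqrt s) * L ≤ norm1 (A.mulVec f) := by
    have e2 : 2 / (5 * Real.sqrt s) * L = 2/5 * (L / Real.sqrt s) := by
      field_simp
    have e3 : L / (5 * Real.sqrt s) = (L / Real.sqrt s) / 5 := by
      rw [div_div, mul_comm]
    have hDy0 := norm2_nonneg' (D.mulVec (y 0))
    rw [e2]
    rw [e3] at hE
    linarith [hW0low, hA1, hA3, hA4, hE, hq1]
  exact hgoal
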